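/- arXiv:2307.05418 — 3 statements merged into one kernel-verified Lean document; each statement's English description precedes it below -/
import Mathlib

section
/- Let (X, A) be a measurable space, F : X ⇉ ℝᵐ a measurable set-valued map with nonempty compact convex values, and f : X → ℝᵐ a measurable function with f(x) ∈ F(x) for a.e. x. Then the set-valued map x ↦ N_{F(x)}(f(x)) (the normal cone to F(x) at f(x)) is measurable. -/
open MeasureTheory Filter Topology Set

/-- Measurability of a set-valued map `G : X ⇉ ℝᵐ`: the preimage
`{x : G(x) ∩ U ≠ ∅}` is measurable for every open `U`. -/
def SVMeasurable {X : Type*} [MeasurableSpace X] {m : ℕ}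
    (G : X → Set (EuclideanSpace ℝ (Fin m))) : Prop :=
  ∀ U : Set (EuclideanSpace ℝ (Fin m)), IsOpen U → MeasurableSet {x | (G x ∩ U).Nonempty}

/-- The normal cone to a convex set `C ⊆ ℝᵐ` at a point `u`. -/
def NormalCone {m : ℕ} (C : Set (EuclideanSpace ℝ (Fin m))) (u : EuclideanSpace ℝ (Fin m)) :
    Set (EuclideanSpace ℝ (Fin m)) :=
  {ν | ∀ v ∈ C, (inner ℝ ν (v - u) : ℝ) ≤ 0}

lemma normalCone_proj {m : ℕ} {C : Set (EuclideanSpace ℝ (Fin m))} (hC : Convex ℝ C)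
    (hne : C.Nonempty) (u q : EuclideanSpace ℝ (Fin m)) {ε : ℝ} (hε : 0 < ε)
    (h : ∀ v ∈ C, (inner ℝ q (v - u) : ℝ) ≤ ε * ‖v - u‖) :
    ∃ n ∈ NormalCone C u, dist n q ≤ ε := by
  classical
  let E := EuclideanSpace ℝ (Fin m)
  set s : Set E := (fun v => u - v) '' C with hs_def
  have hs_conv : Convex ℝ s := by
    rintro w1 ⟨v1, hv1, rfl⟩ w2 ⟨v2, hv2, rfl⟩ a b ha hb hab
    refine ⟨a • v1 + b • v2, hC hv1 hv2 ha hb hab, ?_⟩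
    have : a • u + b • u = u := by rw [← add_smul, hab, one_smul]
    simp only [smul_sub]
    rw [show a • u - a • v1 + (b • u - b • v2) = (a • u + b • u) - (a • v1 + b • v2) by abel, this]
  have hs_ne : s.Nonempty := by
    obtain ⟨v, hv⟩ := hne; exact ⟨u - v, v, hv, rfl⟩
  set K : ConvexCone ℝ E := (hs_conv.toCone s).closure with hK_def
  have hK_closed : IsClosed (K : Set E) := by
    rw [hK_def, ConvexCone.coe_closure]; exact isClosed_closure
  have hK_ne : (K : Set E).Nonempty := by
    obtain ⟨w, hw⟩ := hs_ne
    exact ⟨w, by rw [hK_def, ConvexCone.coe_closure]; exact subset_closure (hs_conv.subset_toCone hw)⟩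
  -- N = dual of K
  have hN_dual : NormalCone C u = ((ProperCone.innerDual (K : Set E)) : Set E) := by
    ext ν
    constructor
    · intro hν
      rw [SetLike.mem_coe, ProperCone.mem_innerDual]
      intro w hw
      -- the set of w with 0 ≤ ⟪w, ν⟫ is closed, contains toCone s
      have hcl : IsClosed {w : E | 0 ≤ (inner ℝ w ν : ℝ)} :=
        isClosed_le continuous_const (continuous_id.inner continuous_const)
      have hsub : ((hs_conv.toCone s : ConvexCone ℝ E) : Set E) ⊆ {w : E | 0 ≤ (inner ℝ w ν : ℝ)} := by
        intro w hw'
        rcases hs_conv.mem_toCone.1 hw' with ⟨c, hc, y, hy, rfl⟩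
        rcases hy with ⟨v, hv, rfl⟩
        have := hν v hv
        have h1 : (inner ℝ (u - v) ν : ℝ) = -(inner ℝ ν (v - u) : ℝ) := by
          rw [real_inner_comm]; rw [show u - v = -(v - u) by abel, inner_neg_right]
        have h2 : (0:ℝ) ≤ inner ℝ (u - v) ν := by rw [h1]; linarith
        simp only [Set.mem_setOf_eq, real_inner_smul_left]
        positivity
      have : (K : Set E) ⊆ {w : E | 0 ≤ (inner ℝ w ν : ℝ)} := by
        rw [hK_def, ConvexCone.coe_closure]
        exact hcl.closure_subset_iff.2 hsub
      exact this hw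
    · intro hν v hv
      have hw : (u - v) ∈ (K : Set E) := by
        rw [hK_def, ConvexCone.coe_closure]
        exact subset_closure (hs_conv.subset_toCone ⟨v, hv, rfl⟩)
      have := (ProperCone.mem_innerDual.1 hν) hw
      have h1 : (inner ℝ (u - v) ν : ℝ) = -(inner ℝ ν (v - u) : ℝ) := by
        rw [real_inner_comm]; rw [show u - v = -(v - u) by abel, inner_neg_right]
      rw [h1] at this; linarith
  have hN_closed : IsClosed (NormalCone C u) := by rw [hN_dual]; exact (ProperCone.innerDual (K : Set E)).isClosed
  have hN_conv : Convex ℝ (NormalCone C u) := by rw [hN_dual]; exact (ProperCone.innerDual (K : Set E)).convex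
  have hN_ne : (NormalCone C u).Nonempty := ⟨0, fun v hv => by simp⟩
  -- project q onto N
  obtain ⟨n, hnN, hmin⟩ :=
    exists_norm_eq_iInf_of_complete_convex hN_ne hN_closed.isComplete hN_conv q
  have hvar := (norm_eq_iInf_iff_real_inner_le_zero hN_conv hnN).1 hmin
  set p : E := q - n with hp_def
  -- ⟪p, n⟫ = 0
  have hN_cone : ∀ w ∈ NormalCone C u, ∀ c : ℝ, 0 ≤ c → c • w ∈ NormalCone C u := by
    intro w hw c hc v hv
    rw [real_inner_smul_left]
    exact mul_nonpos_of_nonneg_of_nonpos hc (hw v hv)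
  have h0 : (0:E) ∈ NormalCone C u := fun v hv => by simp
  have hpn0 : (inner ℝ p n : ℝ) = 0 := by
    have h1 := hvar 0 h0
    have h2 := hvar ((2:ℝ) • n) (hN_cone n hnN 2 (by norm_num))
    rw [zero_sub, inner_neg_right] at h1
    have h3 : (2:ℝ) • n - n = n := by rw [two_smul]; abel
    rw [h3] at h2
    linarith
  -- ⟪p, ν⟫ ≤ 0 for all ν ∈ N
  have hpN : ∀ ν ∈ NormalCone C u, (inner ℝ p ν : ℝ) ≤ 0 := by
    intro ν hν
    have := hvar ν hν
    rw [inner_sub_right] at this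
    linarith [hpn0]
  -- -p ∈ K by bipolar
  have hbipolar : ((ProperCone.innerDual ((ProperCone.innerDual (K : Set E)) : Set E)) : Set E) = K := by
    have := ProperCone.innerDual_innerDual
      (⟨K.toPointedCone (ConvexCone.Pointed.of_nonempty_of_isClosed hK_ne hK_closed), hK_closed⟩ :
        ProperCone ℝ E)
    exact congrArg (fun P : ProperCone ℝ E => (P : Set E)) this
  have hnegp : -p ∈ (K : Set E) := by
    rw [← hbipolar, SetLike.mem_coe, ProperCone.mem_innerDual]
    intro ν hν
    have hνN : ν ∈ NormalCone C u := by rw [hN_dual]; exact hν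
    have := hpN ν hνN
    rw [inner_neg_right, real_inner_comm]; linarith
  -- ψ ≥ 0 on K
  have hpsi : ∀ w ∈ (K : Set E), 0 ≤ ε * ‖w‖ + (inner ℝ q w : ℝ) := by
    have hcl : IsClosed {w : E | 0 ≤ ε * ‖w‖ + (inner ℝ q w : ℝ)} :=
      isClosed_le continuous_const
        ((continuous_norm.const_smul ε).add (continuous_const.inner continuous_id))
    have hsub : ((hs_conv.toCone s : ConvexCone ℝ E) : Set E) ⊆
        {w : E | 0 ≤ ε * ‖w‖ + (inner ℝ q w : ℝ)} := by
      intro w hw'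
      rcases hs_conv.mem_toCone.1 hw' with ⟨c, hc, y, hy, rfl⟩
      rcases hy with ⟨v, hv, rfl⟩
      have hq := h v hv
      have h1 : (inner ℝ q (u - v) : ℝ) = -(inner ℝ q (v - u) : ℝ) := by
        rw [show u - v = -(v - u) by abel, inner_neg_right]
      have h2 : ‖u - v‖ = ‖v - u‖ := by rw [show u - v = -(v - u) by abel, norm_neg]
      have hbase : 0 ≤ ε * ‖u - v‖ + (inner ℝ q (u - v) : ℝ) := by
        rw [h1, h2]; linarith
      simp only [Set.mem_setOf_eq, real_inner_smul_right, norm_smul, Real.norm_eq_abs,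
        abs_of_pos hc]
      calc (0:ℝ) = c * 0 := by ring
        _ ≤ c * (ε * ‖u - v‖ + (inner ℝ q (u - v) : ℝ)) := by
            exact mul_le_mul_of_nonneg_left hbase hc.le
        _ = ε * (c * ‖u - v‖) + c * (inner ℝ q (u - v) : ℝ) := by ring
    intro w hw
    have : (K : Set E) ⊆ {w : E | 0 ≤ ε * ‖w‖ + (inner ℝ q w : ℝ)} := by
      rw [hK_def, ConvexCone.coe_closure]
      exact hcl.closure_subset_iff.2 hsub
    exact this hw
  have hfinal := hpsi _ hnegp
  rw [norm_neg, inner_neg_right] at hfinal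
  -- ⟪q, p⟫ = ‖p‖²
  have hqp : (inner ℝ q p : ℝ) = ‖p‖ ^ 2 := by
    have hq' : q = p + n := by rw [hp_def]; abel
    have hnp : (inner ℝ n p : ℝ) = 0 := by rw [real_inner_comm]; exact hpn0
    rw [hq', inner_add_left, hnp, real_inner_self_eq_norm_sq]; ring
  rw [hqp] at hfinal
  have hplen : ‖p‖ ≤ ε := by
    rcases eq_or_ne p 0 with hp0 | hp0
    · rw [hp0]; simpa using hε.le
    · have hpos : 0 < ‖p‖ := norm_pos_iff.2 hp0
      nlinarith
  exact ⟨n, hnN, by rw [dist_eq_norm, show n - q = -p by rw [hp_def]; abel, norm_neg]; exact hplen⟩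

lemma measurable_B {X : Type*} [MeasurableSpace X] {m : ℕ}
    (F : X → Set (EuclideanSpace ℝ (Fin m))) (hFmeas : SVMeasurable F)
    (f : X → EuclideanSpace ℝ (Fin m)) (hfmeas : Measurable f)
    (q : EuclideanSpace ℝ (Fin m)) (ε : ℝ) :
    MeasurableSet {x | ∀ v ∈ F x, (inner ℝ q (v - f x) : ℝ) ≤ ε * ‖v - f x‖} := by
  classical
  obtain ⟨D, hDc, hDd⟩ := TopologicalSpace.exists_countable_dense (EuclideanSpace ℝ (Fin m))
  -- continuous auxiliary function
  set g : EuclideanSpace ℝ (Fin m) → EuclideanSpace ℝ (Fin m) → ℝ :=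
    fun y w => (inner ℝ q (w - y) : ℝ) - ε * ‖w - y‖ with hg_def
  have hg_cont : ∀ y, Continuous (g y) := by
    intro y
    exact (continuous_const.inner ((continuous_id.sub continuous_const)))|>.sub
      (continuous_const.mul ((continuous_id.sub continuous_const).norm))
  have hg_cont' : ∀ w, Continuous (fun y => g y w) := by
    intro w
    exact (continuous_const.inner ((continuous_const.sub continuous_id)))|>.sub
      (continuous_const.mul ((continuous_const.sub continuous_id).norm))
  set S : Set X := ⋃ r ∈ D, ⋃ δ : ℚ, ⋃ ρ : ℚ,
    {x | 0 < δ ∧ 0 < ρ ∧ (F x ∩ Metric.ball r δ).Nonempty ∧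
      ∀ w ∈ D ∩ Metric.ball r (2*δ), (ρ:ℝ) ≤ g (f x) w} with hS_def
  have hS_meas : MeasurableSet S := by
    refine MeasurableSet.biUnion hDc (fun r _ => ?_)
    refine MeasurableSet.iUnion (fun δ => ?_)
    refine MeasurableSet.iUnion (fun ρ => ?_)
    have h1 : MeasurableSet {x : X | (F x ∩ Metric.ball r (δ:ℝ)).Nonempty} :=
      hFmeas _ Metric.isOpen_ball
    have h2 : MeasurableSet {x : X | ∀ w ∈ D ∩ Metric.ball r (2*(δ:ℝ)), (ρ:ℝ) ≤ g (f x) w} := by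
      have : {x : X | ∀ w ∈ D ∩ Metric.ball r (2*(δ:ℝ)), (ρ:ℝ) ≤ g (f x) w}
          = ⋂ w ∈ D ∩ Metric.ball r (2*(δ:ℝ)), {x : X | (ρ:ℝ) ≤ g (f x) w} := by
        ext x; simp [Set.mem_iInter]
      rw [this]
      refine MeasurableSet.biInter (hDc.mono Set.inter_subset_left) (fun w _ => ?_)
      have : Measurable fun x => g (f x) w := ((hg_cont' w).measurable).comp hfmeas
      exact this measurableSet_Ici
    have : {x : X | 0 < δ ∧ 0 < ρ ∧ (F x ∩ Metric.ball r (δ:ℝ)).Nonempty ∧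
        ∀ w ∈ D ∩ Metric.ball r (2*(δ:ℝ)), (ρ:ℝ) ≤ g (f x) w}
        = {_x : X | 0 < δ} ∩ ({_x : X | 0 < ρ} ∩ ({x : X | (F x ∩ Metric.ball r (δ:ℝ)).Nonempty}
          ∩ {x : X | ∀ w ∈ D ∩ Metric.ball r (2*(δ:ℝ)), (ρ:ℝ) ≤ g (f x) w})) := by
      ext x; simp [Set.mem_inter_iff, and_assoc]
    rw [this]
    exact (MeasurableSet.const _).inter ((MeasurableSet.const _).inter (h1.inter h2))
  have hkey : {x | ∀ v ∈ F x, (inner ℝ q (v - f x) : ℝ) ≤ ε * ‖v - f x‖} = Sᶜ := by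
    ext x
    simp only [Set.mem_setOf_eq, Set.mem_compl_iff]
    constructor
    · -- if ∀ v, inner ≤ ε‖·‖ then x ∉ S
      intro hall hxS
      rw [hS_def] at hxS
      simp only [Set.mem_iUnion] at hxS
      obtain ⟨r, _, δ, ρ, hδ, hρ, ⟨v, hvF, hvball⟩, hwall⟩ := hxS
      have hvcl : v ∈ closure (Metric.ball r (2*(δ:ℝ)) ∩ D) := by
        have h0 : (0:ℝ) < δ := by exact_mod_cast hδ
        have hsub : Metric.ball r (δ:ℝ) ⊆ Metric.ball r (2*(δ:ℝ)) :=
          Metric.ball_subset_ball (by linarith)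
        exact hDd.open_subset_closure_inter Metric.isOpen_ball (hsub hvball)
      have hcl : IsClosed {w | (ρ:ℝ) ≤ g (f x) w} := isClosed_le continuous_const (hg_cont (f x))
      have hsub2 : Metric.ball r (2*(δ:ℝ)) ∩ D ⊆ {w | (ρ:ℝ) ≤ g (f x) w} := by
        rintro w ⟨hw1, hw2⟩; exact hwall w ⟨hw2, hw1⟩
      have hgv : (ρ:ℝ) ≤ g (f x) v := (hcl.closure_subset_iff.2 hsub2) hvcl
      have hgv0 : (0:ℝ) < g (f x) v := lt_of_lt_of_le (by exact_mod_cast hρ) hgv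
      have hexp : g (f x) v = (inner ℝ q (v - f x):ℝ) - ε * ‖v - f x‖ := rfl
      have h2 := hall v hvF
      rw [hexp] at hgv0
      linarith
    · -- if x ∉ S then ∀ v ...
      intro hxS v hvF
      by_contra hlt
      push_neg at hlt
      have hgv : 0 < g (f x) v := by
        have hexp : g (f x) v = (inner ℝ q (v - f x):ℝ) - ε * ‖v - f x‖ := rfl
        rw [hexp]; linarith
      apply hxS
      -- find r δ ρ
      have hO : IsOpen {w | g (f x) v / 2 < g (f x) w} := isOpen_lt continuous_const (hg_cont (f x))
      obtain ⟨η, hη, hball⟩ := Metric.isOpen_iff.1 hO v (by simp only [Set.mem_setOf_eq]; linarith)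
      obtain ⟨δ, hδ1, hδ2⟩ := exists_rat_btwn (show (0:ℝ) < η/3 by linarith)
      have hδpos : 0 < δ := by exact_mod_cast hδ1
      obtain ⟨r, hrD, hrv⟩ := hDd.exists_dist_lt v (show (0:ℝ) < δ by exact_mod_cast hδpos)
      obtain ⟨ρ, hρ1, hρ2⟩ := exists_rat_btwn (show (0:ℝ) < g (f x) v / 2 by linarith)
      have hρpos : 0 < ρ := by exact_mod_cast hρ1
      rw [hS_def]
      simp only [Set.mem_iUnion]
      refine ⟨r, hrD, δ, ρ, hδpos, hρpos, ⟨v, hvF, ?_⟩, ?_⟩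
      · rw [Metric.mem_ball]; exact hrv
      · intro w ⟨hwD, hwball⟩
        have hdwv : dist w v < 3 * (δ:ℝ) := by
          calc dist w v ≤ dist w r + dist r v := dist_triangle w r v
            _ < 2*(δ:ℝ) + (δ:ℝ) := by
                rw [dist_comm r v]
                exact add_lt_add (Metric.mem_ball.1 hwball) hrv
            _ = 3 * (δ:ℝ) := by ring
        have hwO : w ∈ Metric.ball v η := by
          rw [Metric.mem_ball]; linarith
        have h3 := hball hwO
        simp only [Set.mem_setOf_eq] at h3
        exact le_of_lt (lt_trans hρ2 h3)
  rw [hkey]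
  exact hS_meas.compl

/-- If `F : X ⇉ ℝᵐ` is a measurable set-valued map with nonempty compact
convex values and `f` is a measurable selection (a.e.), then the set-valued map
`x ↦ N_{F(x)}(f(x))` is measurable. -/
theorem stmt_3 {X : Type*} [MeasurableSpace X] {m : ℕ} (μ : MeasureTheory.Measure X)
    (F : X → Set (EuclideanSpace ℝ (Fin m)))
    (hFmeas : SVMeasurable F)
    (hFne : ∀ x, (F x).Nonempty) (hFcpt : ∀ x, IsCompact (F x))
    (hFconv : ∀ x, Convex ℝ (F x))
    (f : X → EuclideanSpace ℝ (Fin m)) (hfmeas : Measurable f)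
    (hfF : ∀ᵐ x ∂μ, f x ∈ F x) :
    SVMeasurable (fun x => NormalCone (F x) (f x)) := by
  intro U hU
  obtain ⟨D, hDc, hDd⟩ := TopologicalSpace.exists_countable_dense (EuclideanSpace ℝ (Fin m))
  set T : Set X := ⋃ q ∈ D, ⋃ ε : ℚ,
    {x | 0 < ε ∧ Metric.closedBall q (ε:ℝ) ⊆ U ∧
      ∀ v ∈ F x, (inner ℝ q (v - f x) : ℝ) ≤ (ε:ℝ) * ‖v - f x‖} with hT_def
  have hT_meas : MeasurableSet T := by
    refine MeasurableSet.biUnion hDc (fun q _ => ?_)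
    refine MeasurableSet.iUnion (fun ε => ?_)
    have h1 := measurable_B F hFmeas f hfmeas q (ε:ℝ)
    have : {x : X | 0 < ε ∧ Metric.closedBall q (ε:ℝ) ⊆ U ∧
        ∀ v ∈ F x, (inner ℝ q (v - f x) : ℝ) ≤ (ε:ℝ) * ‖v - f x‖}
        = {_x : X | 0 < ε} ∩ ({_x : X | Metric.closedBall q (ε:ℝ) ⊆ U} ∩
          {x : X | ∀ v ∈ F x, (inner ℝ q (v - f x) : ℝ) ≤ (ε:ℝ) * ‖v - f x‖}) := by
      ext x; simp [Set.mem_inter_iff, and_assoc]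
    rw [this]
    exact (MeasurableSet.const _).inter ((MeasurableSet.const _).inter h1)
  have hkey : {x | ((fun x => NormalCone (F x) (f x)) x ∩ U).Nonempty} = T := by
    ext x
    simp only [Set.mem_setOf_eq]
    constructor
    · rintro ⟨ν, hνN, hνU⟩
      obtain ⟨η, hη, hball⟩ := Metric.isOpen_iff.1 hU ν hνU
      obtain ⟨ε, hε1, hε2⟩ := exists_rat_btwn (show (0:ℝ) < η/3 by linarith)
      have hεpos : 0 < ε := by exact_mod_cast hε1
      obtain ⟨q, hqD, hqν⟩ := hDd.exists_dist_lt ν (show (0:ℝ) < ε by exact_mod_cast hεpos)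
      rw [hT_def]
      simp only [Set.mem_iUnion]
      refine ⟨q, hqD, ε, hεpos, ?_, ?_⟩
      · intro z hz
        apply hball
        rw [Metric.mem_ball]
        calc dist z ν ≤ dist z q + dist q ν := dist_triangle z q ν
          _ ≤ (ε:ℝ) + dist q ν := by
              exact add_le_add_left (Metric.mem_closedBall.1 hz) _
          _ < (ε:ℝ) + (ε:ℝ) := by
              rw [dist_comm q ν]; exact add_lt_add_right hqν _
          _ < η := by linarith
      · intro v hv
        have h1 := hνN v hv
        have h2 := real_inner_le_norm (q - ν) (v - f x)
        rw [inner_sub_left] at h2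
        have h3 : ‖q - ν‖ < (ε:ℝ) := by
          rw [← dist_eq_norm, dist_comm]; exact hqν
        have h4 : ‖q - ν‖ * ‖v - f x‖ ≤ (ε:ℝ) * ‖v - f x‖ :=
          mul_le_mul_of_nonneg_right h3.le (norm_nonneg _)
        have h5 : (inner ℝ ν (v - f x) : ℝ) = (inner ℝ (v - f x) ν : ℝ) := real_inner_comm _ _
        have h6 : (inner ℝ q (v - f x) : ℝ) = (inner ℝ (v - f x) q : ℝ) := real_inner_comm _ _
        -- h2 : inner ℝ (q - ν) (v - f x) ≤ ‖q - ν‖ * ‖v - f x‖ with inner_sub_left expanded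
        linarith
    · intro hxT
      rw [hT_def] at hxT
      simp only [Set.mem_iUnion] at hxT
      obtain ⟨q, hqD, ε, hεpos, hsubU, hcond⟩ := hxT
      obtain ⟨n, hnN, hdist⟩ := normalCone_proj (hFconv x) (hFne x) (f x) q
        (show (0:ℝ) < ε by exact_mod_cast hεpos) hcond
      exact ⟨n, hnN, hsubU (Metric.mem_closedBall.2 hdist)⟩
  rw [hkey]
  exact hT_meas
end

section
/- Let (X, A, μ) be a σ-finite measure space, F : X ⇉ ℝᵐ a measurable set-valued map with nonempty compact convex values, p ∈ [1, ∞], and f ∈ Lᵖ(X; ℝᵐ) with f(x) ∈ F(x) a.e. Suppose there exists a set E of positive measure such that f(x) ∉ ext F(x) for a.e. x ∈ E. Then there exist two distinct functions α, β ∈ Lᵖ(X; ℝᵐ) with α(x), β(x) ∈ F(x) a.e. and f = (α + β)/2 a.e. in X. -/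
open MeasureTheory Filter Topology Set
open scoped ENNReal RealInnerProductSpace

section Aux

variable {X : Type*} [MeasurableSpace X] {m : ℕ}

theorem svm_infEdist {F : X → Set (EuclideanSpace ℝ (Fin m))} (hF : SVMeasurable F)
    (y : EuclideanSpace ℝ (Fin m)) :
    Measurable fun x => Metric.infEDist y (F x) := by
  apply measurable_of_Iio
  intro t
  have h : (fun x => Metric.infEDist y (F x)) ⁻¹' Iio t
      = {x | (F x ∩ Metric.eball y t).Nonempty} := by
    ext x
    simp only [mem_preimage, mem_Iio, mem_setOf_eq, Metric.infEDist_lt_iff]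
    constructor
    · rintro ⟨z, hz, hd⟩
      exact ⟨z, hz, by rwa [Metric.mem_eball, edist_comm]⟩
    · rintro ⟨z, hz, hd⟩
      exact ⟨z, hz, by rwa [Metric.mem_eball, edist_comm] at hd⟩
  rw [h]
  exact hF _ Metric.isOpen_eball

theorem svm_infEdist_comp {F : X → Set (EuclideanSpace ℝ (Fin m))} (hF : SVMeasurable F)
    {h : X → EuclideanSpace ℝ (Fin m)} (hh : Measurable h) :
    Measurable fun x => Metric.infEDist (h x) (F x) := by
  have key : ∀ x, Metric.infEDist (h x) (F x)
      = ⨅ n, (edist (h x) (TopologicalSpace.denseSeq (EuclideanSpace ℝ (Fin m)) n)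
          + Metric.infEDist (TopologicalSpace.denseSeq (EuclideanSpace ℝ (Fin m)) n) (F x)) := by
    intro x
    refine le_antisymm (le_iInf fun n => Metric.infEDist_le_edist_add_infEDist) ?_
    refine ENNReal.le_of_forall_pos_le_add fun ε hε _ => ?_
    obtain ⟨n, hn⟩ : ∃ n, edist (h x) (TopologicalSpace.denseSeq (EuclideanSpace ℝ (Fin m)) n)
        < (ε : ℝ≥0∞) / 2 := by
      have hd := TopologicalSpace.denseRange_denseSeq (EuclideanSpace ℝ (Fin m))
      have hmem : h x ∈ closure (Set.range (TopologicalSpace.denseSeq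
          (EuclideanSpace ℝ (Fin m)))) := by
        rw [denseRange_iff_closure_range] at hd
        rw [hd]; trivial
      rw [EMetric.mem_closure_iff] at hmem
      obtain ⟨b, ⟨n, rfl⟩, hb⟩ := hmem ((ε : ℝ≥0∞) / 2)
        (ENNReal.half_pos (by exact_mod_cast hε.ne'))
      exact ⟨n, hb⟩
    calc (⨅ n, (edist (h x) (TopologicalSpace.denseSeq (EuclideanSpace ℝ (Fin m)) n)
          + Metric.infEDist (TopologicalSpace.denseSeq (EuclideanSpace ℝ (Fin m)) n) (F x)))
        ≤ edist (h x) (TopologicalSpace.denseSeq (EuclideanSpace ℝ (Fin m)) n)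
          + Metric.infEDist (TopologicalSpace.denseSeq (EuclideanSpace ℝ (Fin m)) n) (F x) :=
          iInf_le _ n
      _ ≤ (ε : ℝ≥0∞) / 2 + (Metric.infEDist (h x) (F x)
          + edist (TopologicalSpace.denseSeq (EuclideanSpace ℝ (Fin m)) n) (h x)) :=
          add_le_add hn.le Metric.infEDist_le_infEDist_add_edist
      _ ≤ (ε : ℝ≥0∞) / 2 + (Metric.infEDist (h x) (F x) + (ε : ℝ≥0∞) / 2) := by
          gcongr
          rw [edist_comm]
          exact hn.le
      _ = Metric.infEDist (h x) (F x) + (ε : ℝ≥0∞) := by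
          rw [add_comm, add_assoc, ENNReal.add_halves]
  simp only [key]
  exact Measurable.iInf fun n => (hh.edist measurable_const).add (svm_infEdist hF _)

theorem svm_pair_nonempty {F : X → Set (EuclideanSpace ℝ (Fin m))} (hF : SVMeasurable F)
    (hFcl : ∀ x, IsClosed (F x)) {f' : X → EuclideanSpace ℝ (Fin m)} (hf' : Measurable f')
    {K : Set (EuclideanSpace ℝ (Fin m))} (hK : IsCompact K) :
    MeasurableSet {x | ∃ v ∈ K, f' x + v ∈ F x ∧ f' x - v ∈ F x} := by
  classical
  set φ : X → EuclideanSpace ℝ (Fin m) → ℝ≥0∞ := fun x v =>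
    Metric.infEDist (f' x + v) (F x) + Metric.infEDist (f' x - v) (F x) with hφ
  have hφmeas : ∀ v, Measurable fun x => φ x v := fun v =>
    (svm_infEdist_comp hF (hf'.add_const v)).add (svm_infEdist_comp hF (hf'.sub_const v))
  have hφcont : ∀ x, Continuous fun v => φ x v := fun x =>
    ((Metric.continuous_infEDist).comp (continuous_const.add continuous_id)).add
      ((Metric.continuous_infEDist).comp (continuous_const.sub continuous_id))
  have hφzero : ∀ x v, φ x v = 0 ↔ (f' x + v ∈ F x ∧ f' x - v ∈ F x) := by
    intro x v
    rw [hφ]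
    simp only [add_eq_zero]
    rw [← Metric.mem_iff_infEDist_zero_of_closed (hFcl x),
      ← Metric.mem_iff_infEDist_zero_of_closed (hFcl x)]
  rcases K.eq_empty_or_nonempty with hKe | hKne
  · have : {x | ∃ v ∈ K, f' x + v ∈ F x ∧ f' x - v ∈ F x} = (∅ : Set X) := by
      ext x; simp [hKe]
    rw [this]; exact MeasurableSet.empty
  · have : Nonempty K := hKne.to_subtype
    set u : ℕ → EuclideanSpace ℝ (Fin m) := fun n => (TopologicalSpace.denseSeq K n : _) with hu
    have huK : ∀ n, u n ∈ K := fun n => (TopologicalSpace.denseSeq K n).2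
    have hud : ∀ v ∈ K, ∀ ε : ℝ, 0 < ε → ∃ n, dist v (u n) < ε := by
      intro v hv ε hε
      have hd := TopologicalSpace.denseRange_denseSeq K
      rw [Metric.denseRange_iff] at hd
      obtain ⟨n, hn⟩ := hd ⟨v, hv⟩ ε hε
      exact ⟨n, by rwa [Subtype.dist_eq] at hn⟩
    have hset : {x | ∃ v ∈ K, f' x + v ∈ F x ∧ f' x - v ∈ F x}
        = {x | (⨅ n, φ x (u n)) = 0} := by
      ext x
      simp only [mem_setOf_eq]
      constructor
      · rintro ⟨v, hvK, hv⟩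
        have hv0 : φ x v = 0 := (hφzero x v).2 hv
        refine le_antisymm ?_ (zero_le)
        refine ENNReal.le_of_forall_pos_le_add fun ε hε _ => ?_
        rw [zero_add]
        have hopen : IsOpen {w : EuclideanSpace ℝ (Fin m) | φ x w < (ε : ℝ≥0∞)} :=
          isOpen_lt (hφcont x) continuous_const
        have hvmem : φ x v < (ε : ℝ≥0∞) := by
          rw [hv0]; exact_mod_cast hε
        obtain ⟨δ, hδpos, hδ⟩ := Metric.isOpen_iff.1 hopen v hvmem
        obtain ⟨n, hn⟩ := hud v hvK δ hδpos
        have : φ x (u n) < (ε : ℝ≥0∞) := hδ (by rwa [Metric.mem_ball, dist_comm])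
        exact le_of_lt (lt_of_le_of_lt (iInf_le _ n) this)
      · intro h0
        have hseq : ∀ k : ℕ, ∃ n, φ x (u n) < ((k : ℝ≥0∞) + 1)⁻¹ := by
          intro k
          have hpos : (0 : ℝ≥0∞) < ((k : ℝ≥0∞) + 1)⁻¹ :=
            ENNReal.inv_pos.2 (by simp)
          rw [← h0] at hpos
          exact iInf_lt_iff.1 hpos
        choose n hn using hseq
        obtain ⟨v, hvK, σ, hσ, hconv⟩ := hK.tendsto_subseq fun k => huK (n k)
        refine ⟨v, hvK, (hφzero x v).1 ?_⟩
        have h1 : Tendsto (fun k => φ x (u (n (σ k)))) atTop (𝓝 (φ x v)) :=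
          ((hφcont x).tendsto v).comp hconv
        have h2 : Tendsto (fun k => φ x (u (n (σ k)))) atTop (𝓝 0) := by
          have hB : Tendsto (fun k : ℕ => ((k : ℝ≥0∞) + 1)⁻¹) atTop (𝓝 0) := by
            refine Tendsto.congr (fun k => ?_)
              (ENNReal.tendsto_inv_nat_nhds_zero.comp (tendsto_add_atTop_nat 1))
            show (((k + 1 : ℕ) : ℝ≥0∞))⁻¹ = ((k : ℝ≥0∞) + 1)⁻¹
            push_cast
            rfl
          refine tendsto_of_tendsto_of_tendsto_of_le_of_le tendsto_const_nhds hB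
            (fun k => zero_le) (fun k => ?_)
          refine (hn (σ k)).le.trans ?_
          gcongr
          exact_mod_cast hσ.le_apply
        exact tendsto_nhds_unique h1 h2
    rw [hset]
    exact (Measurable.iInf fun n => hφmeas (u n)) (measurableSet_singleton 0)

end Aux

set_option maxHeartbeats 2000000 in
/-- An `Lᵖ`-selection of `F` that fails to be an extreme-point selection
on a set of positive measure is the midpoint of two distinct `Lᵖ`-selections of `F`. -/
theorem stmt_5 {X : Type*} [MeasurableSpace X] {m : ℕ} (μ : Measure X) [SigmaFinite μ]
    (F : X → Set (EuclideanSpace ℝ (Fin m)))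
    (hFmeas : SVMeasurable F)
    (hFne : ∀ x, (F x).Nonempty) (hFcpt : ∀ x, IsCompact (F x))
    (hFconv : ∀ x, Convex ℝ (F x))
    (p : ℝ≥0∞) (hp : 1 ≤ p)
    (f : X → EuclideanSpace ℝ (Fin m)) (hf : MemLp f p μ)
    (hfF : ∀ᵐ x ∂μ, f x ∈ F x)
    (E : Set X) (hE : MeasurableSet E) (hEpos : 0 < μ E)
    (hnotext : ∀ᵐ x ∂μ, x ∈ E → f x ∉ Set.extremePoints ℝ (F x)) :
    ∃ α β : X → EuclideanSpace ℝ (Fin m),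
      MemLp α p μ ∧ MemLp β p μ ∧
      (∀ᵐ x ∂μ, α x ∈ F x) ∧ (∀ᵐ x ∂μ, β x ∈ F x) ∧
      ¬ (α =ᵐ[μ] β) ∧
      (∀ᵐ x ∂μ, f x = (2⁻¹ : ℝ) • (α x + β x)) := by
  classical
  obtain ⟨f', hf'meas, hff'⟩ : ∃ f' : X → EuclideanSpace ℝ (Fin m),
      Measurable f' ∧ f =ᵐ[μ] f' := by
    have h := hf.aestronglyMeasurable
    exact ⟨h.mk f, h.stronglyMeasurable_mk.measurable, h.ae_eq_mk⟩
  have hFcl : ∀ x, IsClosed (F x) := fun x => (hFcpt x).isClosed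
  have hNmeas : ∀ K : Set (EuclideanSpace ℝ (Fin m)), IsCompact K →
      MeasurableSet {x | ∃ v ∈ K, f' x + v ∈ F x ∧ f' x - v ∈ F x} := fun K hK =>
    svm_pair_nonempty hFmeas hFcl hf'meas hK
  have hcont_i : ∀ i : Fin m, Continuous fun w : EuclideanSpace ℝ (Fin m) => w i := fun i =>
    (EuclideanSpace.proj (𝕜 := ℝ) i).continuous
  -- the candidate half-space sets
  set K0 : Fin m → ℚ → Set (EuclideanSpace ℝ (Fin m)) := fun i c =>
    Metric.closedBall 0 1 ∩ {w | (c : ℝ) ≤ w i} with hK0def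
  have hK0cpt : ∀ i c, IsCompact (K0 i c) := fun i c =>
    (isCompact_closedBall _ _).inter_right (isClosed_le continuous_const (hcont_i i))
  set S : Fin m → ℚ → Set X := fun i c =>
    {x | ∃ v ∈ K0 i c, f' x + v ∈ F x ∧ f' x - v ∈ F x} with hSdef
  have hSmeas : ∀ i c, MeasurableSet (S i c) := fun i c => hNmeas _ (hK0cpt i c)
  -- a.e. on E, the "symmetric displacement set" contains a nonzero vector
  have hMx : ∀ᵐ x ∂μ, x ∈ E → ∃ v : EuclideanSpace ℝ (Fin m),
      v ≠ 0 ∧ ‖v‖ ≤ 1 ∧ f' x + v ∈ F x ∧ f' x - v ∈ F x := by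
    filter_upwards [hnotext, hfF, hff'] with x hxe hxF hxf hxE
    have hfx : f' x ∈ F x := hxf ▸ hxF
    have hne : f' x ∉ Set.extremePoints ℝ (F x) := by rw [← hxf]; exact hxe hxE
    rw [mem_extremePoints] at hne
    push_neg at hne
    obtain ⟨y, hy, z, hz, hseg, hyz⟩ := hne hfx
    obtain ⟨a, b, ha, hb, hab, hsum⟩ := hseg
    have hyne : y ≠ z := by
      rintro rfl
      have hyf : y = f' x := by
        rw [← hsum, ← add_smul, hab, one_smul]
      exact hyz hyf hyf
    set t : ℝ := min a b with htdef
    have ht : 0 < t := lt_min ha hb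
    have hta : t ≤ a := by rw [htdef]; exact min_le_left a b
    have htb : t ≤ b := by rw [htdef]; exact min_le_right a b
    set u : EuclideanSpace ℝ (Fin m) := t • (z - y) with hudef
    have hu0 : u ≠ 0 := smul_ne_zero ht.ne' (sub_ne_zero.2 (Ne.symm hyne))
    have h1 : f' x + u ∈ F x := by
      have hmem := hFconv x hy hz (a := a - t) (b := b + t) (by linarith)
        (by linarith) (by linarith)
      have heq : f' x + u = (a - t) • y + (b + t) • z := by
        rw [hudef, ← hsum]
        module
      rw [heq]; exact hmem
    have h2 : f' x - u ∈ F x := by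
      have hmem := hFconv x hy hz (a := a + t) (b := b - t) (by linarith)
        (by linarith) (by linarith)
      have heq : f' x - u = (a + t) • y + (b - t) • z := by
        rw [hudef, ← hsum]
        module
      rw [heq]; exact hmem
    set s : ℝ := min 1 ‖u‖⁻¹ with hsdef
    have hs0 : 0 < s := lt_min one_pos (inv_pos.2 (norm_pos_iff.2 hu0))
    have hs1 : s ≤ 1 := min_le_left _ _
    refine ⟨s • u, smul_ne_zero hs0.ne' hu0, ?_, ?_, ?_⟩
    · rw [norm_smul, Real.norm_eq_abs, abs_of_pos hs0]
      calc s * ‖u‖ ≤ ‖u‖⁻¹ * ‖u‖ := by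
            have := min_le_right 1 ‖u‖⁻¹
            exact mul_le_mul_of_nonneg_right this (norm_nonneg _)
        _ = 1 := inv_mul_cancel₀ (norm_ne_zero_iff.2 hu0)
    · have hmem := hFconv x hfx h1 (a := 1 - s) (b := s) (by linarith) hs0.le (by ring)
      have : f' x + s • u = (1 - s) • f' x + s • (f' x + u) := by module
      rw [this]; exact hmem
    · have hmem := hFconv x hfx h2 (a := 1 - s) (b := s) (by linarith) hs0.le (by ring)
      have : f' x - s • u = (1 - s) • f' x + s • (f' x - u) := by module
      rw [this]; exact hmem
  -- a.e. on E, x lies in some S i c with c > 0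
  have hcover : ∀ᵐ x ∂μ, x ∈ E → ∃ (i : Fin m) (c : ℚ), 0 < (c : ℝ) ∧ x ∈ S i c := by
    filter_upwards [hMx] with x hx hxE
    obtain ⟨v, hv0, hvn, hv1, hv2⟩ := hx hxE
    have hex : ∃ i, v i ≠ 0 := by
      by_contra h
      push_neg at h
      exact hv0 (by ext j; simpa using h j)
    obtain ⟨i, hvi⟩ := hex
    rcases hvi.lt_or_gt with hneg | hposi
    · -- use -v
      obtain ⟨c, hc0, hcv⟩ := exists_rat_btwn (show (0:ℝ) < (-v) i by
        simpa using neg_pos.2 hneg)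
      refine ⟨i, c, by exact_mod_cast hc0, -v, ⟨?_, hcv.le⟩,
        by rw [← sub_eq_add_neg]; exact hv2, by rw [sub_neg_eq_add]; exact hv1⟩
      rw [mem_closedBall_zero_iff, norm_neg]; exact hvn
    · obtain ⟨c, hc0, hcv⟩ := exists_rat_btwn hposi
      exact ⟨i, c, by simpa using hc0, v, ⟨mem_closedBall_zero_iff.2 hvn, hcv.le⟩, hv1, hv2⟩
  -- choose i, c with positive measure
  have hpos : ∃ (i : Fin m) (c : ℚ), 0 < (c : ℝ) ∧ 0 < μ (E ∩ S i c) := by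
    by_contra h
    push_neg at h
    have hz : ∀ (i : Fin m) (c : ℚ), 0 < (c : ℝ) → μ (E ∩ S i c) = 0 := fun i c hc =>
      le_antisymm (h i c hc) (zero_le)
    have hae : ∀ᵐ x ∂μ, ∀ (i : Fin m) (c : ℚ), 0 < (c:ℝ) → x ∉ E ∩ S i c := by
      rw [ae_all_iff]
      intro i
      rw [ae_all_iff]
      intro c
      rcases lt_or_ge 0 (c:ℝ) with hc | hc
      · filter_upwards [measure_eq_zero_iff_ae_notMem.1 (hz i c hc)] with x hx
        exact fun _ => hx
      · filter_upwards with x hcc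
        exact absurd hcc (not_lt.2 hc)
    have : μ E = 0 := by
      rw [measure_eq_zero_iff_ae_notMem]
      filter_upwards [hcover, hae] with x hx hnx hxE
      obtain ⟨i, c, hc, hxS⟩ := hx hxE
      exact hnx i c hc ⟨hxE, hxS⟩
    exact hEpos.ne' this
  obtain ⟨i, c, hc, hμS⟩ := hpos
  -- positive finite measure piece
  obtain ⟨n0, hn0⟩ : ∃ n, 0 < μ ((E ∩ S i c) ∩ spanningSets μ n) := by
    by_contra h
    push_neg at h
    have hzz : μ (E ∩ S i c) = 0 := by
      have hre : E ∩ S i c = ⋃ n, (E ∩ S i c) ∩ spanningSets μ n := by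
        rw [← inter_iUnion, iUnion_spanningSets, inter_univ]
      rw [hre]
      exact measure_iUnion_null fun n => le_antisymm (h n) (zero_le)
    exact hμS.ne' hzz
  set A : Set X := (E ∩ S i c) ∩ spanningSets μ n0 with hAdef
  have hAmeas : MeasurableSet A := (hE.inter (hSmeas i c)).inter (measurableSet_spanningSets μ n0)
  have hApos : 0 < μ A := hn0
  have hAfin : μ A < ∞ :=
    lt_of_le_of_lt (measure_mono inter_subset_right) (measure_spanningSets_lt_top μ n0)
  -- the target compact convex sets
  set Nx : X → Set (EuclideanSpace ℝ (Fin m)) := fun x =>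
    K0 i c ∩ ({v | f' x + v ∈ F x} ∩ {v | f' x - v ∈ F x}) with hNxdef
  have hNxne : ∀ x ∈ A, (Nx x).Nonempty := by
    intro x hx
    obtain ⟨v, hvK, hv1, hv2⟩ := hx.1.2
    exact ⟨v, hvK, hv1, hv2⟩
  have hNxcpt : ∀ x, IsCompact (Nx x) :=
    fun x => (hK0cpt i c).inter_right
      (((hFcl x).preimage (continuous_const.add continuous_id)).inter
        ((hFcl x).preimage (continuous_const.sub continuous_id)))
  have hNxconv : ∀ x, Convex ℝ (Nx x) := by
    intro x
    refine (Convex.inter ((convex_closedBall _ _).inter ?_) (Convex.inter ?_ ?_))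
    · intro v hv w hw a b ha hb hab
      have h1 : (c:ℝ) ≤ v i := hv
      have h2 : (c:ℝ) ≤ w i := hw
      show (c:ℝ) ≤ (a • v + b • w) i
      have : (a • v + b • w) i = a * v i + b * w i := by
        rw [PiLp.add_apply, PiLp.smul_apply, PiLp.smul_apply, smul_eq_mul, smul_eq_mul]
      rw [this]
      nlinarith
    · intro v hv w hw a b ha hb hab
      show f' x + (a • v + b • w) ∈ F x
      have heq : f' x + (a • v + b • w) = a • (f' x + v) + b • (f' x + w) := by
        rw [smul_add, smul_add, add_add_add_comm, ← add_smul, hab, one_smul]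
      rw [heq]
      exact hFconv x hv hw ha hb hab
    · intro v hv w hw a b ha hb hab
      show f' x - (a • v + b • w) ∈ F x
      have heq : f' x - (a • v + b • w) = a • (f' x - v) + b • (f' x - w) := by
        rw [smul_sub, smul_sub, sub_add_sub_comm, ← add_smul, hab, one_smul]
      rw [heq]
      exact hFconv x hv hw ha hb hab
  -- minimum-norm points
  have hmin : ∀ x, x ∈ A → ∃ p, p ∈ Nx x ∧ ∀ w ∈ Nx x, ‖p‖ ≤ ‖w‖ := by
    intro x hx
    obtain ⟨q0, hq0, hq0min⟩ := (hNxcpt x).exists_isMinOn (hNxne x hx)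
      continuous_norm.continuousOn
    exact ⟨q0, hq0, fun w hw => hq0min hw⟩
  set g : X → EuclideanSpace ℝ (Fin m) :=
    fun x => if hx : x ∈ A then (hmin x hx).choose else 0 with hgdef
  have hgA : ∀ x (hx : x ∈ A), g x ∈ Nx x ∧ ∀ w ∈ Nx x, ‖g x‖ ≤ ‖w‖ := by
    intro x hx
    rw [hgdef]
    simp only [dif_pos hx]
    exact (hmin x hx).choose_spec
  have hgA0 : ∀ x, x ∉ A → g x = 0 := by
    intro x hx
    rw [hgdef]
    simp only [dif_neg hx]
  -- approximating sequence
  set q : ℕ → EuclideanSpace ℝ (Fin m) :=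
    TopologicalSpace.denseSeq (EuclideanSpace ℝ (Fin m)) with hqdef
  set en : ℕ → ℝ := fun n => (2⁻¹ : ℝ) ^ n with hendef
  have hen_pos : ∀ n, 0 < en n := fun n => pow_pos (by norm_num) n
  have hen_le1 : ∀ n, en n ≤ 1 := fun n =>
    pow_le_one₀ (by norm_num) (by norm_num)
  set P : ℕ → ℕ → X → Prop := fun n j x =>
    (Nx x ∩ Metric.closedBall (q j) (en n)).Nonempty ∧
      ¬ (Nx x ∩ Metric.closedBall 0 (‖q j‖ - en n)).Nonempty with hPdef
  have e1 : ∀ (b : EuclideanSpace ℝ (Fin m)) (r : ℝ),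
      MeasurableSet {x | (Nx x ∩ Metric.closedBall b r).Nonempty} := by
    intro b r
    have hEq : {x | (Nx x ∩ Metric.closedBall b r).Nonempty}
        = {x | ∃ v ∈ K0 i c ∩ Metric.closedBall b r, f' x + v ∈ F x ∧ f' x - v ∈ F x} := by
      ext x
      constructor
      · rintro ⟨v, ⟨hvK, hv1, hv2⟩, hvb⟩
        exact ⟨v, ⟨hvK, hvb⟩, hv1, hv2⟩
      · rintro ⟨v, ⟨hvK, hvb⟩, hv1, hv2⟩
        exact ⟨v, ⟨hvK, hv1, hv2⟩, hvb⟩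
    rw [hEq]
    exact hNmeas _ ((hK0cpt i c).inter_right Metric.isClosed_closedBall)
  have hPmeas : ∀ n j, MeasurableSet {x | P n j x} := by
    intro n j
    have : {x | P n j x} = {x | (Nx x ∩ Metric.closedBall (q j) (en n)).Nonempty}
        ∩ {x | (Nx x ∩ Metric.closedBall 0 (‖q j‖ - en n)).Nonempty}ᶜ := rfl
    rw [this]
    exact (e1 _ _).inter (e1 _ _).compl
  have hPex : ∀ n x, x ∈ A → ∃ j, P n j x := by
    intro n x hx
    obtain ⟨hgN, hgmin⟩ := hgA x hx
    obtain ⟨j, hj⟩ : ∃ j, dist (g x) (q j) < en n := by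
      have hd := TopologicalSpace.denseRange_denseSeq (EuclideanSpace ℝ (Fin m))
      rw [Metric.denseRange_iff] at hd
      exact hd (g x) (en n) (hen_pos n)
    refine ⟨j, ⟨g x, hgN, Metric.mem_closedBall.2 hj.le⟩, ?_⟩
    rintro ⟨w, hwN, hwb⟩
    have hw1 : ‖w‖ ≤ ‖q j‖ - en n := by rwa [mem_closedBall_zero_iff] at hwb
    have hw2 : ‖g x‖ ≤ ‖w‖ := hgmin w hwN
    have hw3 : ‖q j‖ < en n + ‖g x‖ := by
      calc ‖q j‖ = dist (q j) 0 := (dist_zero_right _).symm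
        _ ≤ dist (q j) (g x) + dist (g x) 0 := dist_triangle _ _ _
        _ < en n + ‖g x‖ := by
            rw [dist_comm (q j) (g x), dist_zero_right]
            exact add_lt_add_of_lt_of_le hj le_rfl
    linarith
  set J : ℕ → X → ℕ := fun n x => if h : ∃ j, P n j x then Nat.find h else 0 with hJdef
  have hJspec : ∀ n x, (∃ j, P n j x) → P n (J n x) x ∧ ∀ l < J n x, ¬ P n l x := by
    intro n x hx
    simp only [hJdef]
    rw [dif_pos hx]
    exact ⟨Nat.find_spec hx, fun l hl => Nat.find_min hx hl⟩
  have hJmeas : ∀ n, Measurable (J n) := by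
    intro n
    apply measurable_to_countable'
    intro k
    match k with
    | 0 =>
      have hEq : (J n) ⁻¹' {0} = {x | P n 0 x} ∪ ⋂ j, {x | P n j x}ᶜ := by
        ext x
        simp only [mem_preimage, mem_singleton_iff, mem_union, mem_iInter, mem_compl_iff,
          mem_setOf_eq]
        constructor
        · intro h0
          by_cases hx : ∃ j, P n j x
          · left
            have := (hJspec n x hx).1
            rwa [h0] at this
          · right
            push_neg at hx
            exact hx
        · intro h0
          rcases h0 with h0 | h0
          · have hex0 : ∃ j, P n j x := ⟨0, h0⟩
            simp only [hJdef]
            rw [dif_pos hex0]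
            exact (Nat.find_eq_zero hex0).2 h0
          · have hnex : ¬ ∃ j, P n j x := by push_neg; exact h0
            simp only [hJdef]
            rw [dif_neg hnex]
      rw [hEq]
      exact (hPmeas n 0).union (MeasurableSet.iInter fun j => (hPmeas n j).compl)
    | (k + 1) =>
      have hEq : (J n) ⁻¹' {k + 1}
          = {x | P n (k + 1) x} ∩ ⋂ (l : ℕ), ⋂ (_ : l < k + 1), {x | P n l x}ᶜ := by
        ext x
        simp only [mem_preimage, mem_singleton_iff, mem_inter_iff, mem_iInter, mem_compl_iff,
          mem_setOf_eq]
        constructor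
        · intro h0
          have hx : ∃ j, P n j x := by
            by_contra hxn
            simp only [hJdef] at h0
            rw [dif_neg hxn] at h0
            exact Nat.succ_ne_zero k h0.symm
          obtain ⟨h1, h2⟩ := hJspec n x hx
          rw [h0] at h1 h2
          exact ⟨h1, h2⟩
        · rintro ⟨h1, h2⟩
          have hex : ∃ j, P n j x := ⟨k + 1, h1⟩
          simp only [hJdef]
          rw [dif_pos hex, Nat.find_eq_iff]
          exact ⟨h1, h2⟩
      rw [hEq]
      exact (hPmeas n (k + 1)).inter
        (MeasurableSet.iInter fun l => MeasurableSet.iInter fun _ => (hPmeas n l).compl)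
  set gseq : ℕ → X → EuclideanSpace ℝ (Fin m) :=
    fun n x => if x ∈ A then q (J n x) else 0 with hgseqdef
  have hgseqmeas : ∀ n, Measurable (gseq n) := fun n =>
    Measurable.ite hAmeas (measurable_from_top.comp (hJmeas n)) measurable_const
  -- convergence of the approximating sequence
  have htend : ∀ x, Tendsto (fun n => gseq n x) atTop (𝓝 (g x)) := by
    intro x
    by_cases hx : x ∈ A
    · obtain ⟨hgN, hgmin⟩ := hgA x hx
      have hgnorm : ‖g x‖ ≤ 1 := by
        have h := hgN.1.1
        rwa [Metric.mem_closedBall, dist_zero_right] at h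
      have hb : ∀ n, dist (gseq n x) (g x) ≤ en n + Real.sqrt (8 * en n) := by
        intro n
        have hex := hPex n x hx
        obtain ⟨⟨w, hwN, hwball⟩, hnot⟩ := (hJspec n x hex).1
        have h1 : ‖q (J n x)‖ - en n < ‖g x‖ := by
          by_contra hcon
          push_neg at hcon
          exact hnot ⟨g x, hgN, mem_closedBall_zero_iff.2 hcon⟩
        have h2 : ‖w‖ ≤ ‖q (J n x)‖ + en n := by
          calc ‖w‖ = ‖q (J n x) + (w - q (J n x))‖ := by rw [add_sub_cancel]
            _ ≤ ‖q (J n x)‖ + ‖w - q (J n x)‖ := norm_add_le _ _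
            _ ≤ ‖q (J n x)‖ + en n := by
                have := Metric.mem_closedBall.1 hwball
                rw [dist_eq_norm] at this
                linarith
        have hvar : (0:ℝ) ≤ ⟪g x, w - g x⟫ := by
          by_contra hneg
          push_neg at hneg
          have hwp : w ≠ g x := by
            rintro rfl
            simp at hneg
          have hQ : (0:ℝ) < ‖w - g x‖ ^ 2 :=
            pow_pos (norm_pos_iff.2 (sub_ne_zero.2 hwp)) 2
          set tt : ℝ := min 1 (-(⟪g x, w - g x⟫) / ‖w - g x‖ ^ 2) with httdef
          have htt0 : 0 < tt := lt_min one_pos (div_pos (neg_pos.2 hneg) hQ)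
          have htt1 : tt ≤ 1 := min_le_left _ _
          have httI : tt * ‖w - g x‖ ^ 2 ≤ -(⟪g x, w - g x⟫) := by
            have h0 := min_le_right 1 (-(⟪g x, w - g x⟫) / ‖w - g x‖ ^ 2)
            rw [← httdef] at h0
            exact (le_div_iff₀ hQ).1 h0
          have hmem : g x + tt • (w - g x) ∈ Nx x := by
            have heq : g x + tt • (w - g x) = (1 - tt) • g x + tt • w := by module
            rw [heq]
            exact hNxconv x hgN hwN (by linarith) htt0.le (by ring)
          have hle := hgmin _ hmem
          have hsq : ‖g x‖ ^ 2 ≤ ‖g x + tt • (w - g x)‖ ^ 2 :=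
            pow_le_pow_left₀ (norm_nonneg _) hle 2
          rw [norm_add_sq_real, inner_smul_right, norm_smul, Real.norm_eq_abs,
            abs_of_pos htt0, mul_pow] at hsq
          nlinarith [mul_pos htt0 (neg_pos.2 hneg)]
        have hkey : ‖w - g x‖ ^ 2 ≤ ‖w‖ ^ 2 - ‖g x‖ ^ 2 := by
          have hexp := norm_add_sq_real (g x) (w - g x)
          rw [add_sub_cancel] at hexp
          linarith
        have h3 : ‖w - g x‖ ^ 2 ≤ 8 * en n := by
          have hwle : ‖w‖ ≤ ‖g x‖ + 2 * en n := by linarith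
          have hsq2 : ‖w‖ ^ 2 ≤ (‖g x‖ + 2 * en n) ^ 2 :=
            pow_le_pow_left₀ (norm_nonneg _) hwle 2
          nlinarith [hen_pos n, hen_le1 n, norm_nonneg (g x)]
        have h4 : ‖w - g x‖ ≤ Real.sqrt (8 * en n) := by
          calc ‖w - g x‖ = Real.sqrt (‖w - g x‖ ^ 2) := (Real.sqrt_sq (norm_nonneg _)).symm
            _ ≤ Real.sqrt (8 * en n) := Real.sqrt_le_sqrt h3
        have hgseq : gseq n x = q (J n x) := by
          simp only [hgseqdef]
          rw [if_pos hx]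
        calc dist (gseq n x) (g x) ≤ dist (gseq n x) w + dist w (g x) := dist_triangle _ _ _
          _ ≤ en n + Real.sqrt (8 * en n) := by
              refine add_le_add ?_ ?_
              · rw [hgseq, dist_comm]
                exact Metric.mem_closedBall.1 hwball
              · rw [dist_eq_norm]
                exact h4
      rw [tendsto_iff_dist_tendsto_zero]
      have he0 : Tendsto en atTop (𝓝 0) := by
        rw [hendef]
        exact tendsto_pow_atTop_nhds_zero_of_lt_one (by norm_num) (by norm_num)
      have h8 : Tendsto (fun n => (8:ℝ) * en n) atTop (𝓝 0) := by
        simpa only [mul_zero] using he0.const_mul (8:ℝ)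
      have hsqrt : Tendsto (fun n => Real.sqrt (8 * en n)) atTop (𝓝 0) := by
        have h := (Real.continuous_sqrt.tendsto 0).comp h8
        simpa only [Function.comp_def, Real.sqrt_zero] using h
      have hb0 : Tendsto (fun n => en n + Real.sqrt (8 * en n)) atTop (𝓝 0) := by
        simpa only [add_zero] using he0.add hsqrt
      exact tendsto_of_tendsto_of_tendsto_of_le_of_le tendsto_const_nhds hb0
        (fun n => dist_nonneg) hb
    · have hconst : ∀ n, gseq n x = g x := by
        intro n
        rw [hgseqdef]
        simp only [if_neg hx]
        rw [hgA0 x hx]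
      exact Tendsto.congr (fun n => (hconst n).symm) tendsto_const_nhds
  have hgmeas : Measurable g :=
    measurable_of_tendsto_metrizable hgseqmeas (tendsto_pi_nhds.2 htend)
  -- assembling the two selections
  have hmemf' : MemLp f' p μ := hf.ae_eq hff'
  have hind : MemLp (A.indicator g) p μ := by
    refine MemLp.of_le (memLp_indicator_const p hAmeas (1:ℝ) (Or.inr hAfin.ne))
      (hgmeas.indicator hAmeas).aestronglyMeasurable ?_
    filter_upwards with x
    by_cases hx : x ∈ A
    · rw [indicator_of_mem hx, indicator_of_mem hx]
      have h := (hgA x hx).1.1.1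
      rw [Metric.mem_closedBall, dist_zero_right] at h
      simpa using h
    · rw [indicator_of_notMem hx, indicator_of_notMem hx]
      simp
  refine ⟨fun x => f' x + A.indicator g x, fun x => f' x - A.indicator g x,
    hmemf'.add hind, hmemf'.sub hind, ?_, ?_, ?_, ?_⟩
  · filter_upwards [hfF, hff'] with x hxF hxf
    by_cases hx : x ∈ A
    · rw [indicator_of_mem hx]
      exact (hgA x hx).1.2.1
    · rw [indicator_of_notMem hx, add_zero, ← hxf]
      exact hxF
  · filter_upwards [hfF, hff'] with x hxF hxf
    by_cases hx : x ∈ A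
    · rw [indicator_of_mem hx]
      exact (hgA x hx).1.2.2
    · rw [indicator_of_notMem hx, sub_zero, ← hxf]
      exact hxF
  · intro hcon
    have hae0 : ∀ᵐ x ∂μ, x ∉ A := by
      filter_upwards [hcon] with x hx hxA
      rw [indicator_of_mem hxA] at hx
      have hg0 : g x = 0 := by
        have h3 : g x = -g x := by
          have h := hx
          rw [sub_eq_add_neg] at h
          exact add_left_cancel h
        have h2 : g x + g x = 0 := by
          nth_rewrite 2 [h3]
          simp
        have h4 : (2:ℝ) • g x = 0 := by rw [two_smul]; exact h2
        rcases smul_eq_zero.1 h4 with h | h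
        · norm_num at h
        · exact h
      have hgi := (hgA x hxA).1.1.2
      rw [hg0] at hgi
      have hgi2 : (c : ℝ) ≤ (0 : EuclideanSpace ℝ (Fin m)) i := hgi
      have hz0 : ((0 : EuclideanSpace ℝ (Fin m)) i : ℝ) = 0 := rfl
      rw [hz0] at hgi2
      linarith
    exact hApos.ne' (measure_eq_zero_iff_ae_notMem.2 hae0)
  · filter_upwards [hff'] with x hxf
    rw [hxf]
    have heq : (f' x + A.indicator g x) + (f' x - A.indicator g x) = f' x + f' x := by
      module
    rw [heq, ← two_smul ℝ (f' x), smul_smul]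
    norm_num
end

section
/- Let (X, A, μ) be a finite nonatomic measure space and U ⊆ ℝᵐ compact convex with more than one element. Then the feasible set 𝒰 = {u ∈ L¹(X;ℝᵐ) : u(x) ∈ U a.e.} has the Radon–Nikodým property: every nonempty bounded subset W of 𝒰 is dentable, i.e., for every ε > 0 there exist ξ ∈ L^∞(X;ℝᵐ) and δ > 0 such that the slice S(W, ξ, δ) = {w ∈ W : ⟨ξ, w⟩ ≤ inf_{v∈W}⟨ξ, v⟩ + δ} has diameter at most ε in L¹. -/
open MeasureTheory Filter Topology Set
open scoped ENNReal

/-- Weak convergence in `L¹(X; ℝᵐ)`. -/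
def WeakL1Conv {X : Type*} [MeasurableSpace X] {m : ℕ} (μ : Measure X)
    (fn : ℕ → X → EuclideanSpace ℝ (Fin m)) (f : X → EuclideanSpace ℝ (Fin m)) : Prop :=
  ∀ g : X → EuclideanSpace ℝ (Fin m), Measurable g → (∃ C, ∀ x, ‖g x‖ ≤ C) →
    Tendsto (fun n => ∫ x, (inner ℝ (fn n x) (g x) : ℝ) ∂μ) atTop
      (𝓝 (∫ x, (inner ℝ (f x) (g x) : ℝ) ∂μ))

/-- The feasible set `𝒰 = {u ∈ L¹(X;ℝᵐ) : u(x) ∈ U a.e.}`. -/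
def Feasible {X : Type*} [MeasurableSpace X] {m : ℕ} (μ : Measure X)
    (U : Set (EuclideanSpace ℝ (Fin m))) : Set (X → EuclideanSpace ℝ (Fin m)) :=
  {u | Integrable u μ ∧ ∀ᵐ x ∂μ, u x ∈ U}

/-- **Radon–Nikodým property of the feasible set.** Every nonempty bounded
subset `W` of the feasible set `𝒰` is dentable: for every `ε > 0` there are a bounded
measurable `ξ ∈ L^∞(X;ℝᵐ)` and `δ > 0` such that the slice
`S(W, ξ, δ) = {w ∈ W : ⟨ξ, w⟩ ≤ inf_{v ∈ W} ⟨ξ, v⟩ + δ}` has `L¹`-diameter at most `ε`. -/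
theorem stmt_14 {X : Type*} [MeasurableSpace X] {m : ℕ} (μ : Measure X)
    [IsFiniteMeasure μ] [NullSingletonClass μ]
    (U : Set (EuclideanSpace ℝ (Fin m)))
    (hUcpt : IsCompact U) (hUconv : Convex ℝ U) (hUnt : U.Nontrivial)
    (W : Set (X → EuclideanSpace ℝ (Fin m))) (hWne : W.Nonempty)
    (hWU : W ⊆ Feasible μ U)
    (hWbdd : ∃ C : ℝ, ∀ w ∈ W, ∫ x, ‖w x‖ ∂μ ≤ C) :
    ∀ ε > 0, ∃ (ξ : X → EuclideanSpace ℝ (Fin m)) (δ : ℝ), Measurable ξ ∧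
      (∃ C, ∀ x, ‖ξ x‖ ≤ C) ∧ 0 < δ ∧
      ∀ w₁ ∈ W, ∀ w₂ ∈ W,
        (∫ x, (inner ℝ (ξ x) (w₁ x) : ℝ) ∂μ) ≤
          sInf ((fun v => ∫ x, (inner ℝ (ξ x) (v x) : ℝ) ∂μ) '' W) + δ →
        (∫ x, (inner ℝ (ξ x) (w₂ x) : ℝ) ∂μ) ≤
          sInf ((fun v => ∫ x, (inner ℝ (ξ x) (v x) : ℝ) ∂μ) '' W) + δ →
        ∫ x, ‖w₁ x - w₂ x‖ ∂μ ≤ ε := by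
  intro ε hε
  -- a uniform bound on U
  obtain ⟨R, hR0, hRU⟩ : ∃ R : ℝ, 0 ≤ R ∧ ∀ u ∈ U, ‖u‖ ≤ R := by
    obtain ⟨r, hr⟩ := hUcpt.isBounded.subset_closedBall 0
    exact ⟨max r 0, le_max_right _ _, fun u hu =>
      le_trans (by simpa using hr hu) (le_max_left _ _)⟩
  set A := (μ Set.univ).toReal with hA
  have hA0 : 0 ≤ A := ENNReal.toReal_nonneg
  -- a.e. bound for members of W
  have hb : ∀ w ∈ W, ∀ᵐ x ∂μ, ‖w x‖ ≤ R := by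
    intro w hw
    filter_upwards [(hWU hw).2] with x hx using hRU _ hx
  have hint : ∀ w ∈ W, Integrable w μ := fun w hw => (hWU hw).1
  -- integrability of squared norms
  have hN_int : ∀ w ∈ W, Integrable (fun x => ‖w x‖ ^ 2) μ := by
    intro w hw
    refine (integrable_const (R ^ 2)).mono'
      (((hint w hw).aestronglyMeasurable.norm.aemeasurable.pow_const 2).aestronglyMeasurable) ?_
    filter_upwards [hb w hw] with x hx
    rw [Real.norm_eq_abs, abs_of_nonneg (by positivity)]
    exact pow_le_pow_left₀ (norm_nonneg _) hx 2
  -- integrability of inner products of members of W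
  have hI_int : ∀ v ∈ W, ∀ w ∈ W,
      Integrable (fun x => (inner ℝ (v x) (w x) : ℝ)) μ := by
    intro v hv w hw
    refine (integrable_const (R * R)).mono'
      ((hint v hv).aestronglyMeasurable.inner (hint w hw).aestronglyMeasurable) ?_
    filter_upwards [hb v hv, hb w hw] with x hx hy
    calc ‖(inner ℝ (v x) (w x) : ℝ)‖ ≤ ‖v x‖ * ‖w x‖ := norm_inner_le_norm _ _
      _ ≤ R * R := mul_le_mul hx hy (norm_nonneg _) hR0
  -- the sup of squared L² norms over W
  set s := sSup ((fun w => ∫ x, ‖w x‖ ^ 2 ∂μ) '' W) with hsdef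
  have hbddA : BddAbove ((fun w => ∫ x, ‖w x‖ ^ 2 ∂μ) '' W) := by
    refine ⟨R ^ 2 * A, ?_⟩
    rintro _ ⟨w, hw, rfl⟩
    calc ∫ x, ‖w x‖ ^ 2 ∂μ ≤ ∫ _, R ^ 2 ∂μ := by
          refine integral_mono_ae (hN_int w hw) (integrable_const _) ?_
          filter_upwards [hb w hw] with x hx
          exact pow_le_pow_left₀ (norm_nonneg _) hx 2
      _ = R ^ 2 * A := by simp [hA, mul_comm, measureReal_def]
  have hNle : ∀ w ∈ W, ∫ x, ‖w x‖ ^ 2 ∂μ ≤ s := fun w hw => le_csSup hbddA ⟨w, hw, rfl⟩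
  -- choice of parameters
  set η := ε / (2 * (A + 1)) with hηdef
  have hη : 0 < η := by positivity
  set δ := ε * η / 8 with hδdef
  have hδ : 0 < δ := by positivity
  -- choose w₀ nearly attaining s
  obtain ⟨_, ⟨w₀, hw₀W, rfl⟩, hw₀⟩ :
      ∃ a ∈ (fun w => ∫ x, ‖w x‖ ^ 2 ∂μ) '' W, s - δ < a :=
    exists_lt_of_lt_csSup (hWne.image _) (by linarith)
  -- a measurable version of w₀, truncated
  obtain ⟨g, hgmeas, hgae⟩ : ∃ g, Measurable g ∧ w₀ =ᵐ[μ] g := by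
    have h := (hint w₀ hw₀W).aemeasurable
    exact ⟨h.mk w₀, h.measurable_mk, h.ae_eq_mk⟩
  set ξ : X → EuclideanSpace ℝ (Fin m) := fun x => if ‖g x‖ ≤ R then -(g x) else 0 with hξdef
  have hξmeas : Measurable ξ :=
    Measurable.ite (measurableSet_le hgmeas.norm measurable_const) hgmeas.neg measurable_const
  have hξbdd : ∀ x, ‖ξ x‖ ≤ R := by
    intro x
    by_cases h : ‖g x‖ ≤ R <;> simp [hξdef, h, hR0]
  have hξae : ξ =ᵐ[μ] fun x => -(w₀ x) := by
    filter_upwards [hgae, hb w₀ hw₀W] with x h1 h2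
    have : ‖g x‖ ≤ R := by rw [← h1]; exact h2
    simp [hξdef, this, h1]
  -- rewrite the slicing functional
  have hI_eq : ∀ w ∈ W, (∫ x, (inner ℝ (ξ x) (w x) : ℝ) ∂μ)
      = -∫ x, (inner ℝ (w₀ x) (w x) : ℝ) ∂μ := by
    intro w hw
    rw [← integral_neg]
    refine integral_congr_ae ?_
    filter_upwards [hξae] with x hx
    rw [hx]
    simp [inner_neg_left]
  -- the infimum is at most the value at w₀
  have hBddBelow : BddBelow ((fun v => ∫ x, (inner ℝ (ξ x) (v x) : ℝ) ∂μ) '' W) := by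
    refine ⟨-(R * R) * A, ?_⟩
    rintro _ ⟨v, hv, rfl⟩
    have hi : Integrable (fun x => (inner ℝ (ξ x) (v x) : ℝ)) μ := by
      refine ((hI_int w₀ hw₀W v hv).neg).congr ?_
      filter_upwards [hξae] with x hx
      rw [hx]
      simp [inner_neg_left]
    have hlow : ∫ _, (-(R * R) : ℝ) ∂μ ≤ ∫ x, (inner ℝ (ξ x) (v x) : ℝ) ∂μ := by
      refine integral_mono_ae (integrable_const _) hi ?_
      filter_upwards [hb v hv] with x hx
      have h1 : |(inner ℝ (ξ x) (v x) : ℝ)| ≤ ‖ξ x‖ * ‖v x‖ := abs_real_inner_le_norm _ _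
      have h2 : ‖ξ x‖ * ‖v x‖ ≤ R * R :=
        mul_le_mul (hξbdd x) hx (norm_nonneg _) hR0
      have h3 := neg_abs_le (inner ℝ (ξ x) (v x) : ℝ)
      linarith
    calc -(R * R) * A = ∫ _, (-(R * R) : ℝ) ∂μ := by simp [hA, mul_comm, measureReal_def]
      _ ≤ _ := hlow
  have hsInf_le : sInf ((fun v => ∫ x, (inner ℝ (ξ x) (v x) : ℝ) ∂μ) '' W)
      ≤ ∫ x, (inner ℝ (ξ x) (w₀ x) : ℝ) ∂μ := csInf_le hBddBelow ⟨w₀, hw₀W, rfl⟩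
  have hIw₀ : (∫ x, (inner ℝ (ξ x) (w₀ x) : ℝ) ∂μ) = -∫ x, ‖w₀ x‖ ^ 2 ∂μ := by
    rw [hI_eq w₀ hw₀W]
    congr 1
    exact integral_congr_ae (Filter.Eventually.of_forall fun x => real_inner_self_eq_norm_sq _)
  -- the key slice estimate in L²
  have key : ∀ w ∈ W,
      (∫ x, (inner ℝ (ξ x) (w x) : ℝ) ∂μ) ≤
        sInf ((fun v => ∫ x, (inner ℝ (ξ x) (v x) : ℝ) ∂μ) '' W) + δ →
      ∫ x, ‖w x - w₀ x‖ ^ 2 ∂μ ≤ 4 * δ := by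
    intro w hw hslice
    have h1 : (∫ x, (inner ℝ (w₀ x) (w x) : ℝ) ∂μ) ≥ s - 2 * δ := by
      have := hslice.trans (by linarith [hsInf_le] :
        sInf ((fun v => ∫ x, (inner ℝ (ξ x) (v x) : ℝ) ∂μ) '' W) + δ
          ≤ (∫ x, (inner ℝ (ξ x) (w₀ x) : ℝ) ∂μ) + δ)
      rw [hI_eq w hw, hIw₀] at this
      have hs0 : s - δ < ∫ x, ‖w₀ x‖ ^ 2 ∂μ := hw₀
      linarith
    -- expand the square
    have hexp : ∫ x, ‖w x - w₀ x‖ ^ 2 ∂μ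
        = (∫ x, ‖w x‖ ^ 2 ∂μ) - 2 * (∫ x, (inner ℝ (w₀ x) (w x) : ℝ) ∂μ)
          + ∫ x, ‖w₀ x‖ ^ 2 ∂μ := by
      have hpt : ∀ x, ‖w x - w₀ x‖ ^ 2
          = ‖w x‖ ^ 2 - 2 * (inner ℝ (w₀ x) (w x) : ℝ) + ‖w₀ x‖ ^ 2 := by
        intro x
        rw [norm_sub_sq_real, real_inner_comm]
      rw [integral_congr_ae (Filter.Eventually.of_forall hpt)]
      have hfg : Integrable (fun x => ‖w x‖ ^ 2 - 2 * (inner ℝ (w₀ x) (w x) : ℝ)) μ :=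
        (hN_int w hw).sub ((hI_int w₀ hw₀W w hw).const_mul 2)
      rw [integral_add hfg (hN_int w₀ hw₀W),
        integral_sub (hN_int w hw) ((hI_int w₀ hw₀W w hw).const_mul 2), integral_const_mul]
    rw [hexp]
    have h2 := hNle w hw
    have h3 := hNle w₀ hw₀W
    linarith
  -- from L² to L¹
  have L1 : ∀ w ∈ W, (∫ x, ‖w x - w₀ x‖ ^ 2 ∂μ) ≤ 4 * δ →
      ∫ x, ‖w x - w₀ x‖ ∂μ ≤ ε / 2 := by
    intro w hw hsq
    have hint_sq : Integrable (fun x => ‖w x - w₀ x‖ ^ 2) μ := by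
      refine (integrable_const ((2 * R) ^ 2)).mono'
        ((((hint w hw).sub (hint w₀ hw₀W)).aestronglyMeasurable.norm.aemeasurable.pow_const
          2).aestronglyMeasurable) ?_
      filter_upwards [hb w hw, hb w₀ hw₀W] with x hx hy
      rw [Real.norm_eq_abs, abs_of_nonneg (by positivity)]
      refine pow_le_pow_left₀ (norm_nonneg _) ?_ 2
      calc ‖w x - w₀ x‖ ≤ ‖w x‖ + ‖w₀ x‖ := norm_sub_le _ _
        _ ≤ 2 * R := by linarith
    have hmono : ∫ x, ‖w x - w₀ x‖ ∂μ
        ≤ ∫ x, (η / 2 + ‖w x - w₀ x‖ ^ 2 / (2 * η)) ∂μ := by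
      refine integral_mono_ae ((hint w hw).sub (hint w₀ hw₀W)).norm
        ((integrable_const _).add (hint_sq.div_const _)) ?_
      refine Filter.Eventually.of_forall fun x => ?_
      show ‖w x - w₀ x‖ ≤ η / 2 + ‖w x - w₀ x‖ ^ 2 / (2 * η)
      have hkey : η / 2 + ‖w x - w₀ x‖ ^ 2 / (2 * η) - ‖w x - w₀ x‖
          = (‖w x - w₀ x‖ - η) ^ 2 / (2 * η) := by
        field_simp
        ring
      nlinarith [div_nonneg (sq_nonneg (‖w x - w₀ x‖ - η)) (by positivity : (0:ℝ) ≤ 2 * η)]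
    have heq : ∫ x, (η / 2 + ‖w x - w₀ x‖ ^ 2 / (2 * η)) ∂μ
        = η / 2 * A + (∫ x, ‖w x - w₀ x‖ ^ 2 ∂μ) / (2 * η) := by
      rw [integral_add (integrable_const _) (hint_sq.div_const _), integral_const,
        integral_div]
      simp [hA, mul_comm, measureReal_def]
    have hb1 : η / 2 * A ≤ ε / 4 := by
      have hA1 : (0:ℝ) < A + 1 := by positivity
      have h : η * (A + 1) = ε / 2 := by
        rw [hηdef]; field_simp
      nlinarith [hη.le, hA0]
    have hb2 : (∫ x, ‖w x - w₀ x‖ ^ 2 ∂μ) / (2 * η) ≤ ε / 4 := by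
      rw [div_le_iff₀ (by positivity)]
      have : 4 * δ = ε * η / 2 := by rw [hδdef]; ring
      calc (∫ x, ‖w x - w₀ x‖ ^ 2 ∂μ) ≤ 4 * δ := hsq
        _ = ε / 4 * (2 * η) := by rw [hδdef]; ring
    linarith [hmono, heq ▸ hmono]
  -- conclude
  refine ⟨ξ, δ, hξmeas, ⟨R, hξbdd⟩, hδ, ?_⟩
  intro w₁ hw₁ w₂ hw₂ hs₁ hs₂
  have h1 := L1 w₁ hw₁ (key w₁ hw₁ hs₁)
  have h2 := L1 w₂ hw₂ (key w₂ hw₂ hs₂)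
  have hi1 : Integrable (fun x => ‖w₁ x - w₀ x‖) μ := ((hint w₁ hw₁).sub (hint w₀ hw₀W)).norm
  have hi2 : Integrable (fun x => ‖w₂ x - w₀ x‖) μ := ((hint w₂ hw₂).sub (hint w₀ hw₀W)).norm
  have htri : ∫ x, ‖w₁ x - w₂ x‖ ∂μ
      ≤ ∫ x, (‖w₁ x - w₀ x‖ + ‖w₂ x - w₀ x‖) ∂μ := by
    refine integral_mono_ae ((hint w₁ hw₁).sub (hint w₂ hw₂)).norm (hi1.add hi2) ?_
    refine Filter.Eventually.of_forall fun x => ?_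
    calc ‖w₁ x - w₂ x‖ = ‖(w₁ x - w₀ x) - (w₂ x - w₀ x)‖ := by
          rw [sub_sub_sub_cancel_right]
      _ ≤ ‖w₁ x - w₀ x‖ + ‖w₂ x - w₀ x‖ := norm_sub_le _ _
  rw [integral_add hi1 hi2] at htri
  linarith
end
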